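/- If f is posimodular, then the family of extreme sets of f is laminar: any two extreme sets X, Y satisfy X ∩ Y = ∅, X ⊆ Y, or Y ⊆ X. -/

import Mathlib

theorem stmt_1 (V : Type*) [Fintype V] [DecidableEq V] (f : Finset V → ℝ)
    (hpos : ∀ X Y : Finset V, f X + f Y ≥ f (X \ Y) + f (Y \ X))
    (X Y : Finset V)
    (hX : X.Nonempty ∧ ∀ Z : Finset V, Z.Nonempty → Z ⊂ X → f Z > f X)
    (hY : Y.Nonempty ∧ ∀ Z : Finset V, Z.Nonempty → Z ⊂ Y → f Z > f Y) :
    X ∩ Y = ∅ ∨ X ⊆ Y ∨ Y ⊆ X := by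
  by_contra h
  push_neg at h
  obtain ⟨hint, hXY, hYX⟩ := h
  have hXY' : (X \ Y).Nonempty := by
    rw [Finset.sdiff_nonempty]; exact hXY
  have hYX' : (Y \ X).Nonempty := by
    rw [Finset.sdiff_nonempty]; exact hYX
  have hint' : (X ∩ Y).Nonempty := hint
  have h1 : f (X \ Y) > f X := hX.2 _ hXY' ⟨Finset.sdiff_subset, fun hs => by
    obtain ⟨a, ha⟩ := hint'
    have := hs (Finset.mem_inter.1 ha).1
    simp [Finset.mem_sdiff, (Finset.mem_inter.1 ha).2] at this⟩
  have h2 : f (Y \ X) > f Y := hY.2 _ hYX' ⟨Finset.sdiff_subset, fun hs => by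
    obtain ⟨a, ha⟩ := hint'
    have := hs (Finset.mem_inter.1 ha).2
    simp [Finset.mem_sdiff, (Finset.mem_inter.1 ha).1] at this⟩
  linarith [hpos X Y]
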